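/- Filtered subspace lies in span of eigenvectors with nonzero filter value: with B invertible, B⁻¹A = X Λ X⁻¹, Λ diagonal, and Q = Σ_j ω_j (z_j B − A)⁻¹ B Y for Y ∈ ℂ^{n×m₀}, every column of Q is a linear combination of the columns x_i of X for which ρ_a(λ_i) ≠ 0; i.e. Q = X ρ_a(Λ) X⁻¹ Y, so the column space of Q is contained in the span of {x_i : ρ_a(λ_i) ≠ 0}. -/
import Mathlib


open Matrix

/-- the filtered subspace Q = Σ ω_j (z_jB−A)⁻¹BY equals Xρ_a(Λ)X⁻¹Y, so
every column of Q lies in the span of the eigenvector columns x_i with ρ_a(λ_i) ≠ 0. -/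
theorem stmt15 {n ne m0 : ℕ} (A B X : Matrix (Fin n) (Fin n) ℂ) (d : Fin n → ℂ)
    (Y : Matrix (Fin n) (Fin m0) ℂ) (z ω : Fin ne → ℂ)
    (hB : IsUnit B.det) (hX : IsUnit X.det)
    (hdiag : B⁻¹ * A = X * Matrix.diagonal d * X⁻¹)
    (hz : ∀ j, IsUnit (z j • B - A).det)
    (Q : Matrix (Fin n) (Fin m0) ℂ)
    (hQ : Q = ∑ j, ω j • ((z j • B - A)⁻¹ * (B * Y))) :
    Q = X * Matrix.diagonal (fun i => ∑ j, ω j / (z j - d i)) * X⁻¹ * Y ∧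
    ∀ k, Qᵀ k ∈ Submodule.span ℂ ((fun i => Xᵀ i) '' {i | (∑ j, ω j / (z j - d i)) ≠ 0}) := by
  -- Step 1: factor z j • B - A
  have hfac : ∀ j, z j • B - A = B * (X * Matrix.diagonal (fun i => z j - d i) * X⁻¹) := by
    intro j
    have h1 : B * (X * Matrix.diagonal (fun i => z j - d i) * X⁻¹)
        = B * (z j • (1 : Matrix (Fin n) (Fin n) ℂ) - B⁻¹ * A) := by
      congr 1
      rw [hdiag]
      have : Matrix.diagonal (fun i => z j - d i)
          = z j • (1 : Matrix (Fin n) (Fin n) ℂ) - Matrix.diagonal d := by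
        rw [smul_eq_diagonal_mul]
        ext i l
        by_cases h : i = l <;> simp [Matrix.diagonal, h, Matrix.sum_apply]
      rw [this, Matrix.mul_sub, Matrix.sub_mul]
      congr 1
      rw [Matrix.mul_smul, Matrix.mul_one, Matrix.smul_mul,
        Matrix.mul_nonsing_inv X hX]
    rw [h1, Matrix.mul_sub, Matrix.mul_smul, Matrix.mul_one,
      ← Matrix.mul_assoc, Matrix.mul_nonsing_inv B hB, Matrix.one_mul]
  -- z j - d i ≠ 0
  have hnz : ∀ j i, z j - d i ≠ 0 := by
    intro j i
    have hu := hz j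
    rw [hfac j] at hu
    rw [Matrix.det_mul, Matrix.det_mul, Matrix.det_mul] at hu
    have hdet : IsUnit (Matrix.diagonal (fun i => z j - d i)).det :=
      (IsUnit.mul_iff.mp (IsUnit.mul_iff.mp (IsUnit.mul_iff.mp hu).2).1).2
    rw [Matrix.det_diagonal, isUnit_iff_ne_zero] at hdet
    exact Finset.prod_ne_zero_iff.mp hdet i (Finset.mem_univ i)
  -- inverse formula
  have hinv : ∀ j, (z j • B - A)⁻¹ * B = X * Matrix.diagonal (fun i => (z j - d i)⁻¹) * X⁻¹ := by
    intro j
    have hDinv : Matrix.diagonal (fun i => z j - d i) *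
        Matrix.diagonal (fun i => (z j - d i)⁻¹) = 1 := by
      rw [Matrix.diagonal_mul_diagonal]
      have h0 : (fun i => (z j - d i) * (z j - d i)⁻¹) = fun _ => (1:ℂ) := by
        funext i; exact mul_inv_cancel₀ (hnz j i)
      rw [h0, Matrix.diagonal_one]
    have hMinv : (X * Matrix.diagonal (fun i => z j - d i) * X⁻¹) *
        (X * Matrix.diagonal (fun i => (z j - d i)⁻¹) * X⁻¹) = 1 := by
      calc (X * Matrix.diagonal (fun i => z j - d i) * X⁻¹) *
            (X * Matrix.diagonal (fun i => (z j - d i)⁻¹) * X⁻¹)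
          = X * Matrix.diagonal (fun i => z j - d i) * (X⁻¹ * X) *
            Matrix.diagonal (fun i => (z j - d i)⁻¹) * X⁻¹ := by
            simp only [Matrix.mul_assoc]
        _ = 1 := by
            rw [Matrix.nonsing_inv_mul X hX, Matrix.mul_one, Matrix.mul_assoc X,
              hDinv, Matrix.mul_one, Matrix.mul_nonsing_inv X hX]
    rw [hfac j, Matrix.mul_inv_rev, Matrix.inv_eq_right_inv hMinv, Matrix.mul_assoc,
      Matrix.nonsing_inv_mul B hB, Matrix.mul_one]
  -- sum of diagonals
  have hdsum : ∑ j, Matrix.diagonal (fun i => ω j / (z j - d i))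
      = Matrix.diagonal (fun i => ∑ j, ω j / (z j - d i)) := by
    ext i l
    by_cases h : i = l <;> simp [Matrix.diagonal, h, Matrix.sum_apply]
  -- main identity
  have hmain : Q = X * Matrix.diagonal (fun i => ∑ j, ω j / (z j - d i)) * X⁻¹ * Y := by
    rw [hQ]
    have h1 : ∀ j : Fin ne, ω j • ((z j • B - A)⁻¹ * (B * Y))
        = X * Matrix.diagonal (fun i => ω j / (z j - d i)) * X⁻¹ * Y := by
      intro j
      rw [← Matrix.mul_assoc, hinv j]
      have : Matrix.diagonal (fun i => ω j / (z j - d i))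
          = ω j • Matrix.diagonal (fun i => (z j - d i)⁻¹) := by
        rw [← Matrix.diagonal_smul]
        ext a b
        by_cases h : a = b <;> simp [Matrix.diagonal, h, div_eq_mul_inv]
      rw [this, Matrix.mul_smul, Matrix.smul_mul, Matrix.smul_mul]
    rw [Finset.sum_congr rfl (fun j _ => h1 j), ← hdsum]
    simp only [Matrix.mul_sum, Matrix.sum_mul]
  refine ⟨hmain, fun k => ?_⟩
  -- spanning statement
  set ρ : Fin n → ℂ := fun i => ∑ j, ω j / (z j - d i) with hρ
  have hcol : Qᵀ k = ∑ l, (ρ l * (X⁻¹ * Y) l k) • Xᵀ l := by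
    funext i
    rw [hmain, Matrix.mul_assoc, Matrix.mul_assoc]
    simp only [Matrix.transpose_apply, Finset.sum_apply, Pi.smul_apply, smul_eq_mul,
      Matrix.mul_apply, Matrix.diagonal_mul]
    refine Finset.sum_congr rfl fun l _ => ?_
    rw [Finset.sum_eq_single l (fun b _ hb => by
        simp [Matrix.diagonal_apply_ne ρ (Ne.symm hb)])
      (fun h => absurd (Finset.mem_univ l) h)]
    rw [Matrix.diagonal_apply_eq]
    ring
  rw [hcol]
  refine Submodule.sum_mem _ fun l _ => ?_
  by_cases h : ρ l = 0
  · simp [h]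
  · exact Submodule.smul_mem _ _ (Submodule.subset_span ⟨l, h, rfl⟩)
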